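/- Let f : [0,π] → ℝ, f = sin on the 2-sphere (n = 2, R = π, A = -1). Then V(t) = 2π(1 - cos t) and as r → π⁻, G(r) := ∫₀ʳ V(s)²/V'(s) ds satisfies G(r) = B·ln(π - r) + C + O((π-r)²) for some constants B, C with B = V(π)²/(ω₁·A) = -8π (i.e. B = -V(π)²/(2π) with V(π) = 4π). -/

import Mathlib

open Real Set intervalIntegral

private lemma sph_integrand_eq (s : ℝ) :
    (2 * Real.pi * (1 - Real.cos s)) ^ 2 / (2 * Real.pi * Real.sin s)
      = 2 * Real.pi * (Real.sin s * (1 - Real.cos s)) / (1 + Real.cos s) := by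
  by_cases hs : Real.sin s = 0
  · have h := Real.sin_sq_add_cos_sq s
    have hc : Real.cos s = 1 ∨ Real.cos s = -1 := by
      have : (Real.cos s - 1) * (Real.cos s + 1) = 0 := by nlinarith
      rcases mul_eq_zero.1 this with h1 | h1
      · left; linarith
      · right; linarith
    rcases hc with hc | hc <;> simp [hs, hc]
  · have h1 : 1 + Real.cos s ≠ 0 := by
      intro h
      have hpy := Real.sin_sq_add_cos_sq s
      have hs2 : Real.sin s ^ 2 ≠ 0 := pow_ne_zero _ hs
      apply hs2
      nlinarith
    have hπ : (2 : ℝ) * Real.pi * Real.sin s ≠ 0 := by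
      have := Real.pi_ne_zero; positivity
    rw [div_eq_div_iff hπ h1]
    linear_combination (-(4 * Real.pi ^ 2 * (1 - Real.cos s))) * Real.sin_sq_add_cos_sq s

private lemma sph_hasDeriv (s : ℝ) (hc : 1 + Real.cos s ≠ 0) :
    HasDerivAt (fun t => 2 * Real.pi * (Real.cos t - 2 * Real.log (1 + Real.cos t)))
      (2 * Real.pi * (Real.sin s * (1 - Real.cos s)) / (1 + Real.cos s)) s := by
  have h1 : HasDerivAt (fun t : ℝ => 1 + Real.cos t) (-Real.sin s) s := by
    simpa using (Real.hasDerivAt_cos s).const_add 1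
  have h2 := h1.log hc
  have h3 := ((Real.hasDerivAt_cos s).sub (h2.const_mul 2)).const_mul (2 * Real.pi)
  refine HasDerivAt.congr_deriv h3 ?_
  field_simp
  ring

set_option maxHeartbeats 1000000 in
theorem two_sphere_G_log_asymptotics
    (V : ℝ → ℝ) (hV : ∀ t : ℝ, V t = 2 * Real.pi * (1 - Real.cos t))
    (G : ℝ → ℝ)
    (hG : ∀ r : ℝ, G r = ∫ s in (0 : ℝ)..r, V s ^ 2 / (2 * Real.pi * Real.sin s)) :
    (∀ t : ℝ, 2 * Real.pi * (∫ s in (0 : ℝ)..t, Real.sin s) = V t) ∧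
    V Real.pi = 4 * Real.pi ∧
    (-8 * Real.pi = V Real.pi ^ 2 / (2 * Real.pi * (-1))) ∧
    (∃ C₀ : ℝ, ∃ C > (0 : ℝ), ∃ δ > (0 : ℝ), ∀ r : ℝ, Real.pi - δ < r → r < Real.pi →
      |G r - (-8 * Real.pi * Real.log (Real.pi - r) + C₀)| ≤ C * (Real.pi - r) ^ 2) := by
  have hπ := Real.pi_pos
  have hπ3 : Real.pi > 3.14 := by linarith [Real.pi_gt_d6]
  refine ⟨?_, ?_, ?_, ?_⟩
  · intro t
    rw [integral_sin, Real.cos_zero, hV]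
  · rw [hV, Real.cos_pi]; ring
  · rw [hV, Real.cos_pi]
    rw [eq_div_iff (by nlinarith)]
    ring
  · -- closed form for G on (0, π)
    have key : ∀ r : ℝ, 0 < r → r < Real.pi →
        G r = 2 * Real.pi * (Real.cos r - 2 * Real.log (1 + Real.cos r))
              - 2 * Real.pi * (1 - 2 * Real.log 2) := by
      intro r hr0 hrπ
      have huIcc : uIcc (0:ℝ) r = Icc 0 r := uIcc_of_le hr0.le
      have hcc : ∀ t ∈ uIcc (0:ℝ) r, 1 + Real.cos t ≠ 0 := by
        intro t ht
        rw [huIcc, mem_Icc] at ht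
        have : Real.cos Real.pi < Real.cos t :=
          Real.cos_lt_cos_of_nonneg_of_le_pi ht.1 le_rfl (lt_of_le_of_lt ht.2 hrπ)
        rw [Real.cos_pi] at this
        linarith
      have hint : IntervalIntegrable
          (fun s => 2 * Real.pi * (Real.sin s * (1 - Real.cos s)) / (1 + Real.cos s))
          MeasureTheory.volume 0 r := by
        apply ContinuousOn.intervalIntegrable
        exact ContinuousOn.div (by fun_prop) (by fun_prop) hcc
      have heq : (∫ s in (0:ℝ)..r, V s ^ 2 / (2 * Real.pi * Real.sin s))
          = ∫ s in (0:ℝ)..r,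
              2 * Real.pi * (Real.sin s * (1 - Real.cos s)) / (1 + Real.cos s) := by
        apply intervalIntegral.integral_congr
        intro s _
        simp only [hV]
        exact sph_integrand_eq s
      rw [hG, heq,
        intervalIntegral.integral_eq_sub_of_hasDerivAt
          (fun t ht => sph_hasDeriv t (hcc t ht)) hint]
      norm_num
    refine ⟨-4 * Real.pi + 8 * Real.pi * Real.log 2, 8 * Real.pi, by positivity,
      1, one_pos, ?_⟩
    intro r h1 h2
    set x := Real.pi - r with hxdef
    clear_value x
    have hx0 : 0 < x := by rw [hxdef]; linarith
    have hx1 : x < 1 := by rw [hxdef]; linarith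
    rw [key r (by linarith) h2]
    have hcr : Real.cos r = -Real.cos x := by
      rw [show r = Real.pi - x by rw [hxdef]; ring, Real.cos_pi_sub]
    have habs : |x| = x := abs_of_pos hx0
    have hcb := Real.cos_bound (x := x) (by rw [habs]; linarith)
    rw [habs, abs_le] at hcb
    have hub : 1 - Real.cos x ≤ x^2/2 + x^4 * (5/96) := by nlinarith [hcb.1]
    have hlb : x^2/2 - x^4 * (5/96) ≤ 1 - Real.cos x := by nlinarith [hcb.2]
    have hx2 : (0:ℝ) < x^2 := by positivity
    have hx2lt : x^2 < 1 := by nlinarith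
    have hx4 : x^4 ≤ x^2 := by nlinarith [mul_le_mul_of_nonneg_left hx2lt.le hx2.le]
    have hccx : 0 < 1 - Real.cos x := by nlinarith
    set y := 2 * (1 - Real.cos x) / x^2 with hydef
    clear_value y
    have hy0 : 0 < y := by rw [hydef]; positivity
    have hyub : y ≤ 1 + x^2 * (5/48) := by
      rw [hydef, div_le_iff₀ hx2]; nlinarith
    have hylb : 1 - x^2 * (5/48) ≤ y := by
      rw [hydef, le_div_iff₀ hx2]; nlinarith
    have hlog_ub : Real.log y ≤ x^2 * (5/48) :=
      (Real.log_le_sub_one_of_pos hy0).trans (by linarith)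
    have hlog_lb : -(x^2/6) ≤ Real.log y := by
      have hinv := Real.log_le_sub_one_of_pos (inv_pos.2 hy0)
      rw [Real.log_inv] at hinv
      have hinv2 : y⁻¹ - 1 ≤ x^2/6 := by
        rw [sub_le_iff_le_add, inv_le_iff_one_le_mul₀ hy0]
        nlinarith [mul_le_mul_of_nonneg_left hylb (show (0:ℝ) ≤ x^2/6 + 1 by positivity)]
      linarith
    have hlogy : Real.log y = Real.log 2 + Real.log (1 - Real.cos x) - 2 * Real.log x := by
      rw [hydef, Real.log_div (by positivity) (by positivity),
        Real.log_mul (by norm_num) (ne_of_gt hccx), Real.log_pow]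
      push_cast; ring
    have hin : 2 * Real.pi * (Real.cos r - 2 * Real.log (1 + Real.cos r))
          - 2 * Real.pi * (1 - 2 * Real.log 2)
          - (-8 * Real.pi * Real.log x
             + (-4 * Real.pi + 8 * Real.pi * Real.log 2))
        = 2 * Real.pi * (1 - Real.cos x) - 4 * Real.pi * Real.log y := by
      rw [hcr, show (1:ℝ) + -Real.cos x = 1 - Real.cos x by ring,
        show Real.log (1 - Real.cos x) = Real.log y - Real.log 2 + 2 * Real.log x by
          linarith]
      ring
    have hA : 1 - Real.cos x ≤ x^2 := by linarith
    have hB : -Real.log y ≤ x^2 := by linarith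
    have hC : Real.log y ≤ x^2 := by linarith
    have pA := mul_le_mul_of_nonneg_left hA Real.pi_pos.le
    have pB := mul_le_mul_of_nonneg_left hB Real.pi_pos.le
    have pC := mul_le_mul_of_nonneg_left hC Real.pi_pos.le
    have pD := mul_le_mul_of_nonneg_left hccx.le Real.pi_pos.le
    have hpx2 : (0:ℝ) ≤ Real.pi * x^2 := by positivity
    rw [hin, abs_le]
    constructor
    · linarith [pA, pB, pC, pD, hpx2]
    · linarith [pA, pB, pC, pD, hpx2]
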